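/- arXiv:1201.4687 — 12 statements merged into one kernel-verified Lean document; each statement's English description precedes it below -/
import Mathlib

section
/- Let E be a compatible coarse structure on a group G, let π_G : G × G → G be the shear map π_G(x,y) = y^{-1}x, and let F(E) = { π_G(E) : E ∈ E }. Then F(E) is a generating family on G (i.e., it contains a non-empty set and is closed under finite unions, products, and inverses), and E equals the coarse structure E_{F(E)} associated to F(E). -/
open Set Pointwise

/-- A coarse structure on `X`: a collection of entourages containing the diagonal,
closed under subsets, finite unions, inverses and compositions. -/
def IsCoarse {X : Type*} (E : Set (Set (X × X))) : Prop :=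
  ({p : X × X | p.1 = p.2} ∈ E) ∧
  (∀ A ∈ E, ∀ B : Set (X × X), B ⊆ A → B ∈ E) ∧
  (∀ A ∈ E, ∀ B ∈ E, A ∪ B ∈ E) ∧
  (∀ A ∈ E, Prod.swap '' A ∈ E) ∧
  (∀ A ∈ E, ∀ B ∈ E, {p : X × X | ∃ y, (p.1, y) ∈ A ∧ (y, p.2) ∈ B} ∈ E)

/-- `G(A × B)`: the `G`-saturation of `A × B` under the diagonal left action. -/
def GProd {G : Type*} [Group G] (A B : Set G) : Set (G × G) :=
  {p | ∃ g : G, ∃ a ∈ A, ∃ b ∈ B, p = (g * a, g * b)}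

/-- A subset of `G × G` is `G`-invariant for the diagonal left action. -/
def GInvariant {G : Type*} [Group G] (E : Set (G × G)) : Prop :=
  ∀ g : G, ∀ p ∈ E, (g * p.1, g * p.2) ∈ E

/-- The coarse structure associated to a family `F` of subsets of a group `G`. -/
def EF {G : Type*} [Group G] (F : Set (Set G)) : Set (Set (G × G)) :=
  {E | ∃ A ∈ F, E ⊆ GProd A A}

/-- A generating family for a compatible coarse structure on a group `G`. -/
structure IsGenFamily {G : Type*} [Group G] (F : Set (Set G)) : Prop where
  exists_nonempty : ∃ A ∈ F, A.Nonempty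
  union_mem : ∀ A ∈ F, ∀ B ∈ F, A ∪ B ∈ F
  mul_mem : ∀ A ∈ F, ∀ B ∈ F, A * B ∈ F
  inv_mem : ∀ A ∈ F, A⁻¹ ∈ F

/-- Image of an entourage under the shear map `(x, y) ↦ y⁻¹ * x`. -/
def shearImage {G : Type*} [Group G] (E : Set (G × G)) : Set G :=
  (fun p : G × G => p.2⁻¹ * p.1) '' E

/-- The family of shear-map images of the entourages of `E`. -/
def FofE {G : Type*} [Group G] (E : Set (Set (G × G))) : Set (Set G) :=
  shearImage '' E

/-- The completion of a family of subsets of `G`. -/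
def hatF {G : Type*} (F : Set (Set G)) : Set (Set G) :=
  {A | ∃ B ∈ F, A ⊆ B}

/-- A family `U` of subsets of `X` is `L`-disjoint. -/
def LDisjoint {X : Type*} (L : Set (X × X)) (U : Set (Set X)) : Prop :=
  ∀ A ∈ U, ∀ B ∈ U, A ≠ B → ∀ a ∈ A, ∀ b ∈ B, (a, b) ∉ L

/-- A family `U` of subsets of `X` is uniformly bounded for the coarse structure `E`. -/
def UnifBounded {X : Type*} (E : Set (Set (X × X))) (U : Set (Set X)) : Prop :=
  ∃ M ∈ E, ∀ A ∈ U, A ×ˢ A ⊆ M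

/-- `asdimLE E n` : the asymptotic dimension of the coarse structure `E` is at most `n`. -/
def asdimLE {X : Type*} (E : Set (Set (X × X))) (n : ℕ) : Prop :=
  ∀ L ∈ E, ∃ U : Fin (n + 1) → Set (Set X),
    (⋃ i, ⋃₀ U i) = Set.univ ∧ (∀ i, LDisjoint L (U i)) ∧ UnifBounded E (⋃ i, U i)

/-- A coarsely uniform (bornologous) map between coarse spaces. -/
def CoarselyUniform {X Y : Type*} (E : Set (Set (X × X))) (E' : Set (Set (Y × Y)))
    (f : X → Y) : Prop :=
  ∀ A ∈ E, Prod.map f f '' A ∈ E'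

/-- Two maps into a coarse space are close. -/
def Close {S X : Type*} (E : Set (Set (X × X))) (p q : S → X) : Prop :=
  {r : X × X | ∃ s : S, r = (p s, q s)} ∈ E

/-- A coarse embedding between coarse spaces. -/
def CoarseEmbedding {X Y : Type*} (E : Set (Set (X × X))) (E' : Set (Set (Y × Y)))
    (f : X → Y) : Prop :=
  CoarselyUniform E E' f ∧ ∀ A ∈ E', Prod.map f f ⁻¹' A ∈ E

/-- A bounded subset of a coarse space: a set of the form `A(x)`. -/
def IsBddSet {X : Type*} (E : Set (Set (X × X))) (B : Set X) : Prop :=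
  ∃ A ∈ E, ∃ x : X, B = {y | (y, x) ∈ A}

/-- A coarse space is connected if every point of `X × X` lies in some entourage. -/
def ConnectedCoarse {X : Type*} (E : Set (Set (X × X))) : Prop :=
  ∀ p : X × X, ∃ A ∈ E, p ∈ A

/-- The family `F|_H = { A ∩ H : A ∈ F }`, viewed as subsets of the subgroup `H`. -/
def restrictFamily {G : Type*} [Group G] (F : Set (Set G)) (H : Subgroup G) : Set (Set H) :=
  (fun A => (Subtype.val ⁻¹' A : Set H)) '' F

section Aux
open Set Pointwise
variable {G : Type*} [Group G]

lemma shear_surj : Function.Surjective (fun p : G × G => p.2⁻¹ * p.1) :=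
  fun s => ⟨(s, 1), by simp⟩

/-- If `S` is contained in the shear image of an invariant entourage, then `S ∈ FofE E`. -/
lemma mem_FofE_of_subset (E : Set (Set (G × G))) (hE : IsCoarse E)
    {C : Set (G × G)} (hC : C ∈ E) (hCinv : GInvariant C)
    {S : Set G} (hS : S ⊆ shearImage C) : S ∈ FofE E := by
  refine ⟨(fun p : G × G => p.2⁻¹ * p.1) ⁻¹' S, ?_, ?_⟩
  · apply hE.2.1 C hC
    rintro ⟨x, y⟩ hxy
    have hx : y⁻¹ * x ∈ S := hxy
    obtain ⟨⟨p, q⟩, hpq, heq⟩ := hS hx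
    have h1 : (q⁻¹ * p, q⁻¹ * q) ∈ C := hCinv q⁻¹ _ hpq
    have h2 := hCinv y _ h1
    simp only [heq, inv_mul_cancel, mul_one] at h2
    simpa [mul_assoc] using h2
  · exact Set.image_preimage_eq S shear_surj

lemma comp_invariant {A B : Set (G × G)} (hA : GInvariant A) (hB : GInvariant B) :
    GInvariant {p : G × G | ∃ y, (p.1, y) ∈ A ∧ (y, p.2) ∈ B} := by
  rintro g ⟨x, z⟩ ⟨y, h1, h2⟩
  exact ⟨g * y, hA g _ h1, hB g _ h2⟩

end Aux

theorem stmt_1 {G : Type*} [Group G] (E : Set (Set (G × G))) (hE : IsCoarse E)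
    (hcompat : ∀ A ∈ E, ∃ A' ∈ E, A ⊆ A' ∧ GInvariant A') :
    IsGenFamily (FofE E) ∧ E = EF (FofE E) := by
  obtain ⟨hdiag, hsub, hunion, hswap, hcomp⟩ := hE
  have hE' : IsCoarse E := ⟨hdiag, hsub, hunion, hswap, hcomp⟩
  constructor
  · constructor
    · -- exists_nonempty
      refine ⟨shearImage {p : G × G | p.1 = p.2}, ⟨_, hdiag, rfl⟩, ⟨1, ⟨(1, 1), rfl, by simp⟩⟩⟩
    · -- union
      rintro _ ⟨A, hA, rfl⟩ _ ⟨B, hB, rfl⟩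
      refine ⟨A ∪ B, hunion A hA B hB, ?_⟩
      simp [shearImage, Set.image_union]
    · -- mul
      rintro _ ⟨A, hA, rfl⟩ _ ⟨B, hB, rfl⟩
      obtain ⟨A', hA', hAA', hA'inv⟩ := hcompat A hA
      obtain ⟨B', hB', hBB', hB'inv⟩ := hcompat B hB
      refine mem_FofE_of_subset E hE' (hcomp B' hB' A' hA') (comp_invariant hB'inv hA'inv) ?_
      rintro s ⟨a, ⟨⟨x, y⟩, hxy, rfl⟩, b, ⟨⟨z, w⟩, hzw, rfl⟩, rfl⟩
      refine ⟨(x * w⁻¹ * z, y), ⟨x, ?_, hAA' hxy⟩, ?_⟩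
      · have := hB'inv (x * w⁻¹) _ (hBB' hzw)
        simpa [mul_assoc] using this
      · simp [mul_assoc]
    · -- inv
      rintro _ ⟨A, hA, rfl⟩
      refine ⟨Prod.swap '' A, hswap A hA, ?_⟩
      ext s
      constructor
      · rintro ⟨p, ⟨⟨x, y⟩, hxy, hsw⟩, h⟩
        subst hsw
        rw [Set.mem_inv]
        refine ⟨(x, y), hxy, ?_⟩
        simp only [Prod.swap_prod_mk] at h ⊢
        rw [← h]
        group
      · intro hs
        rw [Set.mem_inv] at hs
        obtain ⟨⟨x, y⟩, hxy, h⟩ := hs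
        refine ⟨(y, x), ⟨(x, y), hxy, rfl⟩, ?_⟩
        simp only at h ⊢
        have : x⁻¹ * y = (y⁻¹ * x)⁻¹ := by group
        rw [this, h, inv_inv]
  · ext A
    constructor
    · intro hA
      obtain ⟨A', hA', hAA', hA'inv⟩ := hcompat A hA
      set A'' := A' ∪ {p : G × G | p.1 = p.2} with hA''def
      have hA''E : A'' ∈ E := hunion A' hA' _ hdiag
      have hA''inv : GInvariant A'' := by
        rintro g p (hp | hp)
        · exact Or.inl (hA'inv g p hp)
        · exact Or.inr (by simp_all)
      refine ⟨shearImage A'', ⟨A'', hA''E, rfl⟩, ?_⟩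
      rintro ⟨x, y⟩ hxy
      refine ⟨y, y⁻¹ * x, ⟨(x, y), Or.inl (hAA' hxy), rfl⟩, 1, ⟨(1, 1), Or.inr rfl, by simp⟩, ?_⟩
      simp
    · rintro ⟨S, ⟨B, hB, rfl⟩, hsub'⟩
      obtain ⟨B', hB', hBB', hB'inv⟩ := hcompat B hB
      apply hsub _ ?_ A hsub'
      -- GProd (shearImage B) (shearImage B) ⊆ comp B' (swap B')
      have hswapB' : Prod.swap '' B' ∈ E := hswap B' hB'
      apply hsub _ (hcomp B' hB' _ hswapB')
      rintro ⟨u, v⟩ ⟨g, a, ⟨⟨p, q⟩, hpq, rfl⟩, b, ⟨⟨z, w⟩, hzw, rfl⟩, heq⟩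
      obtain ⟨rfl, rfl⟩ := Prod.mk.injEq .. ▸ (by exact heq : (u, v) = (g * (q⁻¹ * p), g * (w⁻¹ * z)))
      refine ⟨g, ?_, ?_⟩
      · have := hB'inv (g * q⁻¹) _ (hBB' hpq)
        simpa [mul_assoc] using this
      · have := hB'inv (g * w⁻¹) _ (hBB' hzw)
        refine ⟨(g * w⁻¹ * z, g * w⁻¹ * w), this, ?_⟩
        simp [mul_assoc]
end

section
/- Let G be a Hausdorff topological group with topology τ and let d be a left invariant pseudo-metric on G. The group-compact coarse structure on G coincides with the bounded coarse structure associated to d if and only if every relatively compact subset of G is d-bounded and every d-bounded subset of G is relatively compact. -/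
open Set Pointwise

theorem stmt_5 {G : Type*} [Group G] [TopologicalSpace G] [IsTopologicalGroup G] [T2Space G]
    (d : G → G → ℝ) (hrefl : ∀ x, d x x = 0) (hsymm : ∀ x y, d x y = d y x)
    (htri : ∀ x y z, d x z ≤ d x y + d y z)
    (hinv : ∀ g x y, d (g * x) (g * y) = d x y) :
    EF {K : Set G | IsCompact K} = {E : Set (G × G) | ∃ C : ℝ, ∀ p ∈ E, d p.1 p.2 ≤ C} ↔
      ((∀ A : Set G, IsCompact (closure A) → ∃ C : ℝ, ∀ x ∈ A, ∀ y ∈ A, d x y ≤ C) ∧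
       (∀ A : Set G, (∃ C : ℝ, ∀ x ∈ A, ∀ y ∈ A, d x y ≤ C) → IsCompact (closure A))) := by
  constructor
  · intro h
    constructor
    · intro A hA
      have hmem : (A ×ˢ A : Set (G × G)) ∈ EF {K : Set G | IsCompact K} := by
        refine ⟨closure A, hA, ?_⟩
        rintro ⟨x, y⟩ ⟨hx, hy⟩
        exact ⟨1, x, subset_closure hx, y, subset_closure hy, by simp⟩
      rw [h] at hmem
      obtain ⟨C, hC⟩ := hmem
      exact ⟨C, fun x hx y hy => hC (x, y) ⟨hx, hy⟩⟩
    · rintro A ⟨C, hC⟩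
      have hmem : (A ×ˢ A : Set (G × G)) ∈ EF {K : Set G | IsCompact K} := by
        rw [h]
        exact ⟨C, fun p hp => hC p.1 hp.1 p.2 hp.2⟩
      obtain ⟨K, hK, hsub⟩ := hmem
      rcases A.eq_empty_or_nonempty with rfl | ⟨a, ha⟩
      · simpa using isCompact_empty
      · have hcomp : IsCompact ({a} * (K⁻¹ * K)) :=
          isCompact_singleton.mul ((hK.inv).mul hK)
        have hAsub : A ⊆ {a} * (K⁻¹ * K) := by
          intro x hx
          obtain ⟨g, k1, hk1, k2, hk2, heq⟩ := hsub (⟨hx, ha⟩ : (x, a) ∈ A ×ˢ A)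
          rw [Prod.ext_iff] at heq
          obtain ⟨h1, h2⟩ := heq
          simp only at h1 h2
          have hx' : x = a * (k2⁻¹ * k1) := by
            rw [h1, h2]; group
          rw [hx']
          exact Set.mul_mem_mul rfl (Set.mul_mem_mul (Set.inv_mem_inv.mpr hk2) hk1)
        exact hcomp.of_isClosed_subset isClosed_closure
          (closure_minimal hAsub hcomp.isClosed)
  · rintro ⟨h1, h2⟩
    ext E
    constructor
    · rintro ⟨K, hK, hsub⟩
      obtain ⟨C, hC⟩ := h1 K (by rwa [hK.isClosed.closure_eq])
      refine ⟨C, fun p hp => ?_⟩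
      obtain ⟨g, a, ha, b, hb, heq⟩ := hsub hp
      rw [heq]
      simpa [hinv] using hC a ha b hb
    · rintro ⟨C, hC⟩
      set S : Set G := (fun p : G × G => p.2⁻¹ * p.1) '' E ∪ {1} with hS
      have hone : ∀ x ∈ S, d x 1 ≤ max C 0 := by
        rintro x (⟨⟨u, v⟩, hp, rfl⟩ | hx1)
        · have : d (v⁻¹ * u) 1 = d u v := by
            have := hinv v (v⁻¹ * u) 1
            simpa using this.symm
          rw [this]
          exact le_max_of_le_left (hC (u, v) hp)
        · simp only [Set.mem_singleton_iff] at hx1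
          rw [hx1, hrefl]
          exact le_max_right _ _
      have hScomp : IsCompact (closure S) := by
        refine h2 S ⟨max C 0 + max C 0, fun x hx y hy => ?_⟩
        calc d x y ≤ d x 1 + d 1 y := htri x 1 y
          _ = d x 1 + d y 1 := by rw [hsymm 1 y]
          _ ≤ max C 0 + max C 0 := add_le_add (hone x hx) (hone y hy)
      refine ⟨closure S, hScomp, ?_⟩
      rintro ⟨x, y⟩ hp
      refine ⟨y, y⁻¹ * x, subset_closure (Or.inl ⟨(x, y), hp, rfl⟩),
        1, subset_closure (Or.inr rfl), ?_⟩
      simp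
end

section
/- Let G be a locally compact Hausdorff topological group with a generating set Σ ⊆ G such that Σ ∪ {1} ∪ Σ^{-1} is compact. Then the group-compact coarse structure on G coincides with the bounded coarse structure associated to the word metric d_Σ. -/
open Set Pointwise

private lemma list_prod_mem_pow_aux {G : Type*} [Monoid G] {T : Set G} :
    ∀ l : List G, (∀ a ∈ l, a ∈ T) → l.prod ∈ T ^ l.length
  | [], _ => by simp [Set.mem_one]
  | a :: l, h => by
    rw [List.prod_cons, List.length_cons, pow_succ']
    exact Set.mul_mem_mul (h a List.mem_cons_self)
      (list_prod_mem_pow_aux l fun b hb => h b (List.mem_cons_of_mem a hb))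

private lemma isCompact_pow_aux {G : Type*} [Monoid G] [TopologicalSpace G]
    [ContinuousMul G] {T : Set G} (hT : IsCompact T) : ∀ n : ℕ, IsCompact (T ^ n)
  | 0 => by rw [pow_zero]; exact Set.finite_one.isCompact
  | n + 1 => by
    rw [pow_succ]
    exact (isCompact_pow_aux hT n).mul hT

private lemma key_aux {G : Type*} [Group G] [TopologicalSpace G] [IsTopologicalGroup G]
    [T2Space G] [LocallyCompactSpace G] {T : Set G} (hTc : IsCompact T) (hT1 : (1 : G) ∈ T)
    (hTinv : T⁻¹ = T) (hfull : ∀ x : G, ∃ n : ℕ, x ∈ T ^ n) {K : Set G} (hK : IsCompact K) :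
    ∃ n : ℕ, K ⊆ T ^ n := by
  have hclosed : ∀ n : ℕ, IsClosed (T ^ n) := fun n => (isCompact_pow_aux hTc n).isClosed
  have huniv : (⋃ n : ℕ, T ^ n) = Set.univ := by
    ext x
    simp only [Set.mem_iUnion, Set.mem_univ, iff_true]
    exact hfull x
  obtain ⟨m, x, hx⟩ := nonempty_interior_of_iUnion_of_closed hclosed huniv
  -- `U := x⁻¹ • interior (T ^ m)` is an open neighborhood of 1 inside `T ^ (2 * m)`
  set U : Set G := x⁻¹ • interior (T ^ m) with hU
  have hUopen : IsOpen U := isOpen_interior.smul _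
  have h1U : (1 : G) ∈ U := ⟨x, hx, inv_mul_cancel x⟩
  have hxm : x⁻¹ ∈ T ^ m := by
    have : x ∈ T ^ m := interior_subset hx
    rw [← hTinv, inv_pow]
    exact Set.inv_mem_inv.2 this
  have hUsub : U ⊆ T ^ (m + m) := by
    intro u hu
    obtain ⟨v, hv, rfl⟩ := hu
    rw [pow_add]
    exact Set.mul_mem_mul hxm (interior_subset hv)
  -- cover K by translates of U
  have hcover : K ⊆ ⋃ g : G, g • U := fun k _ =>
    Set.mem_iUnion.2 ⟨k, 1, h1U, mul_one k⟩
  obtain ⟨t, ht⟩ := hK.elim_finite_subcover (fun g : G => g • U)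
    (fun g => hUopen.smul g) hcover
  choose f hf using hfull
  refine ⟨t.sup f + (m + m), fun k hk => ?_⟩
  obtain ⟨g, hgt, u, hu, rfl⟩ := by simpa using ht hk
  rw [pow_add]
  exact Set.mul_mem_mul
    (Set.pow_subset_pow_right hT1 (Finset.le_sup hgt) (hf g)) (hUsub hu)

theorem stmt_6 {G : Type*} [Group G] [TopologicalSpace G] [IsTopologicalGroup G] [T2Space G]
    [LocallyCompactSpace G] (S : Set G) (hgen : Subgroup.closure S = ⊤)
    (hcpt : IsCompact (S ∪ {1} ∪ S⁻¹)) :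
    EF {K : Set G | IsCompact K} =
      {E : Set (G × G) | ∃ n : ℕ, ∀ p ∈ E, p.2⁻¹ * p.1 ∈ (S ∪ {1} ∪ S⁻¹) ^ n} := by
  set T := S ∪ {1} ∪ S⁻¹ with hT
  have hT1 : (1 : G) ∈ T := Or.inl (Or.inr rfl)
  have hTinv : T⁻¹ = T := by
    ext x
    simp only [hT, Set.mem_inv, Set.mem_union, Set.mem_singleton_iff, inv_eq_one]
    constructor <;> rintro ((h | h) | h)
    · exact Or.inr (by simpa using h)
    · exact Or.inl (Or.inr h)
    · exact Or.inl (Or.inl (by simpa using h))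
    · exact Or.inr (by simpa using h)
    · exact Or.inl (Or.inr h)
    · exact Or.inl (Or.inl (by simpa using h))
  have hfull : ∀ x : G, ∃ n : ℕ, x ∈ T ^ n := by
    intro x
    have hx : x ∈ Subgroup.closure S := hgen ▸ Subgroup.mem_top x
    have hx' : x ∈ Submonoid.closure (S ∪ S⁻¹) := by
      rw [← Subgroup.closure_toSubmonoid] at *
      exact hx
    obtain ⟨l, hl, rfl⟩ := Submonoid.exists_list_of_mem_closure hx'
    refine ⟨l.length, list_prod_mem_pow_aux l fun a ha => ?_⟩
    rcases hl a ha with h | h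
    · exact Or.inl (Or.inl h)
    · exact Or.inr h
  have h1pow : ∀ n : ℕ, (1 : G) ∈ T ^ n := fun n =>
    Set.pow_subset_pow_right hT1 (Nat.zero_le n) (by simp [Set.mem_one])
  ext E
  constructor
  · rintro ⟨K, hKc, hsub⟩
    obtain ⟨n, hn⟩ := key_aux hcpt hT1 hTinv hfull (hKc.inv.mul hKc)
    refine ⟨n, fun p hp => ?_⟩
    obtain ⟨g, a, ha, b, hb, hpeq⟩ := hsub hp
    have : p.2⁻¹ * p.1 = b⁻¹ * a := by
      rw [hpeq]
      simp [mul_assoc]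
    rw [this]
    exact hn (Set.mul_mem_mul (Set.inv_mem_inv.2 hb) ha)
  · rintro ⟨n, hn⟩
    refine ⟨T ^ n, isCompact_pow_aux hcpt n, fun p hp => ?_⟩
    exact ⟨p.2, p.2⁻¹ * p.1, hn p hp, 1, h1pow n, by simp⟩
end

section
/- There is no left invariant pseudo-metric d on the additive topological group Z[1/2] (dyadic rationals with the subspace topology from ℝ) such that the bounded coarse structure associated to d coincides with the group-compact coarse structure on Z[1/2]. -/
open Set Pointwise

/-- Additive version of `G(A × B)`: the saturation of `A × B` under the diagonal
left translation action of `G`. -/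
def AddGProd {G : Type*} [AddGroup G] (A B : Set G) : Set (G × G) :=
  {p | ∃ g : G, ∃ a ∈ A, ∃ b ∈ B, p = (g + a, g + b)}

/-- The coarse structure associated to a family `F` of subsets of an additive group. -/
def AddEF {G : Type*} [AddGroup G] (F : Set (Set G)) : Set (Set (G × G)) :=
  {E | ∃ A ∈ F, E ⊆ AddGProd A A}

/-- The group `ℤ[1/2]` of dyadic rationals, as an additive subgroup of `ℝ`
(whose coercion to a type carries the subspace topology from `ℝ`). -/
def Zhalf : AddSubgroup ℝ where
  carrier := {x : ℝ | ∃ m : ℤ, ∃ n : ℕ, x = m / 2 ^ n}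
  zero_mem' := ⟨0, 0, by norm_num⟩
  add_mem' := by
    rintro a b ⟨m, n, rfl⟩ ⟨m', n', rfl⟩
    refine ⟨m * 2 ^ n' + m' * 2 ^ n, n + n', ?_⟩
    have h1 : (2 : ℝ) ^ n ≠ 0 := by positivity
    have h2 : (2 : ℝ) ^ n' ≠ 0 := by positivity
    push_cast
    rw [div_add_div _ _ h1 h2, div_eq_div_iff (by positivity) (by positivity)]
    ring
  neg_mem' := by
    rintro a ⟨m, n, rfl⟩
    exact ⟨-m, n, by push_cast; ring⟩

-- dyadic approximation
lemma dyadic_dense (t δ : ℝ) (hδ : 0 < δ) : ∃ q ∈ Zhalf, |q - t| < δ := by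
  obtain ⟨n, hn⟩ := pow_unbounded_of_one_lt (1/δ) (by norm_num : (1:ℝ) < 2)
  refine ⟨(⌊t * 2 ^ n⌋ : ℝ) / 2 ^ n, ⟨⌊t * 2 ^ n⌋, n, rfl⟩, ?_⟩
  have h2 : (0:ℝ) < 2 ^ n := by positivity
  have h1 := Int.sub_one_lt_floor (t * 2 ^ n)
  have h3 := Int.floor_le (t * 2 ^ n)
  have hub : (⌊t * 2 ^ n⌋ : ℝ) / 2 ^ n ≤ t := by rw [div_le_iff₀ h2]; exact h3
  have hlb : t - 1 / 2 ^ n < (⌊t * 2 ^ n⌋ : ℝ) / 2 ^ n := by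
    rw [lt_div_iff₀ h2]
    have h4 : (1 / 2 ^ n) * (2:ℝ) ^ n = 1 := by field_simp
    nlinarith [h1, h4]
  have hd : 1 / 2 ^ n < δ := by
    rw [div_lt_iff₀ h2]
    have := (div_lt_iff₀ hδ).mp hn
    nlinarith
  rw [abs_lt]; constructor <;> linarith

-- countability of Zhalf
lemma zhalf_countable : (Zhalf : Set ℝ).Countable := by
  have : (Zhalf : Set ℝ) ⊆ Set.range (fun p : ℤ × ℕ => (p.1 : ℝ) / 2 ^ p.2) := by
    rintro x ⟨m, n, rfl⟩; exact ⟨(m, n), rfl⟩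
  exact (Set.countable_range _).mono this

lemma compact_misses (K : Set Zhalf) (hK : IsCompact K) (ε : ℝ) (hε : 0 < ε) :
    ∃ x : Zhalf, |(x : ℝ)| < ε ∧ x ∉ K := by
  set K' : Set ℝ := Subtype.val '' K with hK'def
  have hK' : IsCompact K' := hK.image continuous_subtype_val
  have hcl : IsClosed K' := hK'.isClosed
  have hsub : ¬ (Ioo (-ε) ε ⊆ K') := by
    intro h
    have hc : (Ioo (-ε) ε : Set ℝ).Countable := by
      refine (zhalf_countable.mono ?_).mono h
      rintro x ⟨y, _, rfl⟩
      exact y.2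
    rw [← Set.countable_coe_iff, ← Cardinal.mk_le_aleph0_iff] at hc
    rw [Cardinal.mk_Ioo_real (by linarith : -ε < ε)] at hc
    exact absurd hc (not_le.mpr Cardinal.aleph0_lt_continuum)
  obtain ⟨t, htI, htK⟩ := not_subset.mp hsub
  have hopen : IsOpen (Ioo (-ε) ε ∩ K'ᶜ) := isOpen_Ioo.inter hcl.isOpen_compl
  obtain ⟨δ, hδ, hball⟩ := Metric.isOpen_iff.mp hopen t ⟨htI, htK⟩
  obtain ⟨q, hq, hqt⟩ := dyadic_dense t δ hδ
  have hmem : q ∈ Ioo (-ε) ε ∩ K'ᶜ := hball (by simpa [Real.dist_eq] using hqt)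
  refine ⟨⟨q, hq⟩, ?_, fun hxK => hmem.2 ⟨⟨q, hq⟩, hxK, rfl⟩⟩
  rw [abs_lt]; exact ⟨hmem.1.1, hmem.1.2⟩

/-- There is no left invariant pseudo-metric on the topological group `ℤ[1/2]` whose
bounded coarse structure coincides with the group-compact coarse structure. -/
theorem stmt_7 :
    ¬ ∃ d : Zhalf → Zhalf → ℝ,
      (∀ x, d x x = 0) ∧ (∀ x y, d x y = d y x) ∧
      (∀ x y z, d x z ≤ d x y + d y z) ∧
      (∀ g x y, d (g + x) (g + y) = d x y) ∧
      ({E : Set (Zhalf × Zhalf) | ∃ C : ℝ, ∀ p ∈ E, d p.1 p.2 ≤ C} =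
        AddEF {K : Set Zhalf | IsCompact K}) := by
  rintro ⟨d, _, _, _, _, heq⟩
  -- for each n, the ball B n is contained in a compact set
  have hball : ∀ n : ℕ, ∃ K : Set Zhalf, IsCompact K ∧ {x : Zhalf | d 0 x ≤ n} ⊆ K := by
    intro n
    have hE : ({0} ×ˢ {x : Zhalf | d 0 x ≤ n} : Set (Zhalf × Zhalf)) ∈
        {E : Set (Zhalf × Zhalf) | ∃ C : ℝ, ∀ p ∈ E, d p.1 p.2 ≤ C} := by
      refine ⟨n, ?_⟩
      rintro ⟨p1, p2⟩ ⟨hp1, hp2⟩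
      simp only [mem_singleton_iff] at hp1
      subst hp1; exact hp2
    rw [heq] at hE
    obtain ⟨A, hA, hsub⟩ := hE
    refine ⟨(fun p : Zhalf × Zhalf => p.2 - p.1) '' (A ×ˢ A),
      (hA.prod hA).image (continuous_snd.sub continuous_fst), ?_⟩
    intro x hx
    obtain ⟨g, a, ha, b, hb, hp⟩ := hsub (show ((0 : Zhalf), x) ∈ _ from ⟨rfl, hx⟩)
    have h1 : (0 : Zhalf) = g + a := congrArg Prod.fst hp
    have h2 : x = g + b := congrArg Prod.snd hp
    have hg : g = -a := by rw [eq_neg_iff_add_eq_zero]; exact h1.symm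
    refine ⟨(a, b), ⟨ha, hb⟩, ?_⟩
    show b - a = x
    rw [h2, hg]; abel
  choose K hKc hKb using hball
  -- every compact set is d-bounded from 0
  have hcompactBdd : ∀ S : Set Zhalf, IsCompact S → ∃ C : ℝ, ∀ x ∈ S, d 0 x ≤ C := by
    intro S hS
    have hS' : IsCompact (insert (0 : Zhalf) S) := hS.insert 0
    have hE : ({p : Zhalf × Zhalf | ∃ g : Zhalf, ∃ a ∈ insert (0:Zhalf) S, ∃ b ∈ insert (0:Zhalf) S,
        p = (g + a, g + b)}) ∈ {E : Set (Zhalf × Zhalf) | ∃ C : ℝ, ∀ p ∈ E, d p.1 p.2 ≤ C} := by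
      rw [heq]
      exact ⟨insert 0 S, hS', subset_rfl⟩
    obtain ⟨C, hC⟩ := hE
    refine ⟨C, fun x hx => ?_⟩
    have := hC (0, x) ⟨0, 0, mem_insert _ _, x, mem_insert_of_mem _ hx, by simp⟩
    simpa using this
  -- pick x n close to 0 avoiding K n
  have hx : ∀ n : ℕ, ∃ x : Zhalf, |(x : ℝ)| < 1 / (n + 1) ∧ x ∉ K n := by
    intro n
    exact compact_misses (K n) (hKc n) (1 / (n + 1)) (by positivity)
  choose x hxsmall hxnot using hx
  -- x n → 0 in Zhalf
  have hxt : Filter.Tendsto x Filter.atTop (nhds 0) := by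
    rw [tendsto_subtype_rng]
    have h0 : Filter.Tendsto (fun n : ℕ => (1 : ℝ) / (n + 1)) Filter.atTop (nhds 0) :=
      tendsto_one_div_add_atTop_nhds_zero_nat
    refine squeeze_zero_norm (fun n => ?_) h0
    exact le_of_lt (hxsmall n)
  have hScompact : IsCompact (insert (0 : Zhalf) (Set.range x)) := hxt.isCompact_insert_range
  obtain ⟨C, hC⟩ := hcompactBdd _ hScompact
  obtain ⟨m, hm⟩ := exists_nat_ge C
  have : x m ∈ K m := hKb m (le_trans (hC (x m) (mem_insert_of_mem _ ⟨m, rfl⟩)) hm)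
  exact hxnot m this
end

section
/- Let G be a group with generating family F and let H ⊆ G be a subgroup. If there exists B ∈ F with HB = G, then the inclusion map i : (H, E_{F|_H}) → (G, E_F) is a coarse equivalence. -/
open Set Pointwise

theorem stmt_11 {G : Type*} [Group G] (F : Set (Set G)) (hF : IsGenFamily F)
    (H : Subgroup G) (B : Set G) (hB : B ∈ F) (hHB : (H : Set G) * B = Set.univ) :
    CoarselyUniform (EF (restrictFamily F H)) (EF F) (Subtype.val : H → G) ∧
    ∃ ψ : G → H, CoarselyUniform (EF F) (EF (restrictFamily F H)) ψ ∧
      Close (EF (restrictFamily F H)) (ψ ∘ Subtype.val) id ∧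
      Close (EF F) (Subtype.val ∘ ψ) id := by
  classical
  -- choose a section of the multiplication map H × B → G
  have hmem : ∀ g : G, ∃ h ∈ (H : Set G), ∃ c ∈ B, h * c = g := by
    intro g
    have hg : g ∈ (H : Set G) * B := by rw [hHB]; trivial
    simpa [Set.mem_mul] using hg
  choose φ hφH β hβB hfac using hmem
  have hβ : ∀ g : G, β g = (φ g)⁻¹ * g := by
    intro g
    exact eq_inv_mul_of_mul_eq (hfac g)
  -- B is nonempty, so 1 ∈ B⁻¹ * B
  have hone : (1 : G) ∈ B⁻¹ * B := by
    have : (β 1)⁻¹ * β 1 = 1 := by group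
    rw [← this]
    exact Set.mul_mem_mul (Set.inv_mem_inv.mpr (hβB 1)) (hβB 1)
  -- the basic bounding set
  have hA0 : B ∪ B⁻¹ * B ∈ F :=
    hF.union_mem B hB _ (hF.mul_mem _ (hF.inv_mem B hB) B hB)
  set ψ : G → H := fun g => ⟨φ g, hφH g⟩ with hψdef
  refine ⟨?_, ψ, ?_, ?_, ?_⟩
  · -- inclusion is coarsely uniform
    rintro E ⟨A, ⟨A', hA'F, rfl⟩, hEA⟩
    refine ⟨A', hA'F, ?_⟩
    rintro p ⟨q, hq, rfl⟩
    obtain ⟨g, a, ha, c, hc, rfl⟩ := hEA hq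
    exact ⟨(g : G), a, ha, c, hc, rfl⟩
  · -- ψ is coarsely uniform
    rintro E ⟨A, hA, hEA⟩
    set D : Set G := (B * ((A⁻¹ * A) * B⁻¹)) ∪ (B⁻¹ * B) with hDdef
    have hD : D ∈ F :=
      hF.union_mem _ (hF.mul_mem B hB _ (hF.mul_mem _
        (hF.mul_mem _ (hF.inv_mem A hA) A hA) _ (hF.inv_mem B hB))) _
        (hF.mul_mem _ (hF.inv_mem B hB) B hB)
    refine ⟨(Subtype.val ⁻¹' D : Set H), ⟨D, hD, rfl⟩, ?_⟩
    rintro p ⟨⟨x, y⟩, hq, rfl⟩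
    obtain ⟨g, a, ha, c, hc, hxy⟩ := hEA hq
    have hx : x = g * a := (congrArg Prod.fst hxy)
    have hy : y = g * c := (congrArg Prod.snd hxy)
    have hmemH : (φ y)⁻¹ * φ x ∈ H :=
      H.mul_mem (H.inv_mem (hφH y)) (hφH x)
    refine ⟨ψ y, ⟨(φ y)⁻¹ * φ x, hmemH⟩, ?_, 1, ?_, ?_⟩
    · -- (φ y)⁻¹ * φ x ∈ D
      show (φ y)⁻¹ * φ x ∈ D
      have key : (φ y)⁻¹ * φ x = β y * ((c⁻¹ * a) * (β x)⁻¹) := by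
        rw [hβ x, hβ y, hx, hy]; group
      rw [key]
      exact Or.inl (Set.mul_mem_mul (hβB y) (Set.mul_mem_mul
        (Set.mul_mem_mul (Set.inv_mem_inv.mpr hc) ha) (Set.inv_mem_inv.mpr (hβB x))))
    · show ((1 : H) : G) ∈ D
      exact Or.inr hone
    · -- (ψ x, ψ y) = (ψ y * ((φ y)⁻¹ φ x), ψ y * 1)
      simp only [Prod.map_apply]
      refine Prod.ext ?_ ?_ <;> · apply Subtype.ext; simp [hψdef]
  · -- ψ ∘ val close to id on H
    refine ⟨Subtype.val ⁻¹' (B ∪ B⁻¹ * B), ⟨_, hA0, rfl⟩, ?_⟩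
    rintro p ⟨s, rfl⟩
    have hbH : (φ (s : G))⁻¹ * (s : G) ∈ H :=
      H.mul_mem (H.inv_mem (hφH _)) s.2
    refine ⟨ψ (s : G), 1, ?_, ⟨(φ (s : G))⁻¹ * (s : G), hbH⟩, ?_, ?_⟩
    · show ((1 : H) : G) ∈ B ∪ B⁻¹ * B
      exact Or.inr hone
    · show (φ (s : G))⁻¹ * (s : G) ∈ B ∪ B⁻¹ * B
      exact Or.inl (by rw [← hβ]; exact hβB _)
    · refine Prod.ext ?_ ?_ <;> · apply Subtype.ext; simp [hψdef]
  · -- val ∘ ψ close to id on G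
    refine ⟨B ∪ B⁻¹ * B, hA0, ?_⟩
    rintro p ⟨s, rfl⟩
    refine ⟨φ s, 1, Or.inr hone, (φ s)⁻¹ * s, Or.inl (by rw [← hβ]; exact hβB _), ?_⟩
    refine Prod.ext ?_ ?_ <;> simp [hψdef]
end

section
/- Let G be a Hausdorff topological group and H a closed subgroup such that G/H is compact and the quotient map p_H : G → G/H satisfies: every compact subset of G/H is the image of a compact subset of G. Then the inclusion (H, E_{C(H)}) → (G, E_{C(G)}) is a coarse equivalence of group-compact coarse structures. -/
open Set Pointwise

lemma mem_EF_compact {G : Type*} [Group G] [TopologicalSpace G]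
    {E : Set (G × G)} {C : Set G} (hC : IsCompact C)
    (h : ∀ p ∈ E, p.2⁻¹ * p.1 ∈ C) :
    E ∈ EF {K : Set G | IsCompact K} := by
  refine ⟨C ∪ {1}, hC.union isCompact_singleton, ?_⟩
  rintro ⟨x, y⟩ hp
  exact ⟨y, y⁻¹ * x, Or.inl (h _ hp), 1, Or.inr rfl, by simp [mul_assoc]⟩

lemma isCompact_preimage_val {G : Type*} [TopologicalSpace G] {H : Set G}
    {S : Set G} (hS : IsCompact S) (hSH : S ⊆ H) :
    IsCompact ((Subtype.val : H → G) ⁻¹' S) := by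
  rw [Topology.IsEmbedding.subtypeVal.isCompact_iff, Subtype.image_preimage_coe]
  simpa [inter_eq_right.mpr hSH] using hS

theorem stmt_12 {G : Type*} [Group G] [TopologicalSpace G] [IsTopologicalGroup G] [T2Space G]
    (H : Subgroup G) (hclosed : IsClosed (H : Set G)) [CompactSpace (G ⧸ H)]
    (hPropK : ∀ K : Set (G ⧸ H), IsCompact K →
      ∃ K' : Set G, IsCompact K' ∧ QuotientGroup.mk '' K' = K) :
    CoarselyUniform (EF {K : Set H | IsCompact K}) (EF {K : Set G | IsCompact K})
      (Subtype.val : H → G) ∧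
    ∃ ψ : G → H,
      CoarselyUniform (EF {K : Set G | IsCompact K}) (EF {K : Set H | IsCompact K}) ψ ∧
      Close (EF {K : Set H | IsCompact K}) (ψ ∘ Subtype.val) id ∧
      Close (EF {K : Set G | IsCompact K}) (Subtype.val ∘ ψ) id := by
  classical
  constructor
  · -- inclusion is coarsely uniform
    rintro E ⟨A, hA, hEA⟩
    refine ⟨Subtype.val '' A, hA.image continuous_subtype_val, ?_⟩
    rintro ⟨u, v⟩ ⟨⟨x, y⟩, hxy, hm⟩
    obtain ⟨g, a, ha, b, hb, hpe⟩ := hEA hxy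
    refine ⟨g, a, mem_image_of_mem _ ha, b, mem_image_of_mem _ hb, ?_⟩
    have h1 : x = g * a := congrArg Prod.fst hpe
    have h2 : y = g * b := congrArg Prod.snd hpe
    simp only [Prod.map, Prod.mk.injEq] at hm
    rw [← hm.1, ← hm.2, h1, h2]
    simp
  · obtain ⟨K', hK'c, hK'⟩ := hPropK univ isCompact_univ
    have key : ∀ g : G, ∃ k ∈ K', g * k ∈ H := by
      intro g
      have h1 : (QuotientGroup.mk g⁻¹ : G ⧸ H) ∈ QuotientGroup.mk '' K' := by
        rw [hK']; trivial
      obtain ⟨k, hk, hmk⟩ := h1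
      refine ⟨k, hk, ?_⟩
      have h2 : k⁻¹ * g⁻¹ ∈ H := QuotientGroup.eq.mp hmk
      simpa [mul_inv_rev] using H.inv_mem h2
    choose kf hkK hkH using key
    refine ⟨fun g => ⟨g * kf g, hkH g⟩, ?_, ?_, ?_⟩
    · -- ψ coarsely uniform
      rintro E ⟨A, hA, hEA⟩
      have hD : IsCompact ((K'⁻¹ * (A⁻¹ * A) * K') ∩ (H : Set G)) :=
        ((hK'c.inv.mul (hA.inv.mul hA)).mul hK'c).inter_right hclosed
      refine mem_EF_compact (isCompact_preimage_val hD inter_subset_right) ?_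
      rintro ⟨u, v⟩ ⟨⟨x, y⟩, hxy, hm⟩
      obtain ⟨g, a, ha, b, hb, hpe⟩ := hEA hxy
      have h1 : x = g * a := congrArg Prod.fst hpe
      have h2 : y = g * b := congrArg Prod.snd hpe
      simp only [Prod.map, Prod.mk.injEq] at hm
      constructor
      · have : ((v : H) : G)⁻¹ * ((u : H) : G) ∈ K'⁻¹ * (A⁻¹ * A) * K' := by
          rw [← hm.1, ← hm.2]
          have := mul_mem_mul (mul_mem_mul (inv_mem_inv.mpr (hkK y))
            (mul_mem_mul (inv_mem_inv.mpr hb) ha)) (hkK x)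
          convert this using 1
          push_cast
          rw [h1, h2]
          group
        exact this
      · exact ((v : H)⁻¹ * (u : H)).2
    · -- Close (ψ ∘ val) id
      have hD : IsCompact (K' ∩ (H : Set G)) := hK'c.inter_right hclosed
      refine mem_EF_compact (isCompact_preimage_val hD inter_subset_right) ?_
      rintro ⟨u, v⟩ ⟨s, hs⟩
      simp only [Prod.mk.injEq] at hs
      constructor
      · have : ((v : H) : G)⁻¹ * ((u : H) : G) ∈ K' := by
          rw [hs.1, hs.2]
          simpa [mul_assoc] using hkK (s : G)
        exact this
      · exact ((v : H)⁻¹ * (u : H)).2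
    · -- Close (val ∘ ψ) id
      refine mem_EF_compact hK'c ?_
      rintro ⟨u, v⟩ ⟨s, hs⟩
      simp only [Prod.mk.injEq] at hs
      rw [hs.1, hs.2]
      simpa [mul_assoc] using hkK s
end

section
/- Let G be a Hausdorff topological group and N a compact normal subgroup. Then the quotient map p_N : (G, E_{C(G)}) → (G/N, E_{C(G/N)}) is a coarse equivalence. -/
open Set Pointwise

private lemma compact_preimage_mk {G : Type*} [Group G] [TopologicalSpace G] [IsTopologicalGroup G]
    (N : Subgroup G) (hN : IsCompact (N : Set G)) {K : Set (G ⧸ N)} (hK : IsCompact K) :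
    IsCompact ((QuotientGroup.mk : G → G ⧸ N) ⁻¹' K) := by
  have hproper : IsProperMap (QuotientGroup.mk : G → G ⧸ N) := by
    rw [isProperMap_iff_isClosedMap_and_compact_fibers]
    refine ⟨continuous_quotient_mk', QuotientGroup.isClosedMap_coe hN, fun y => ?_⟩
    have : (QuotientGroup.mk : G → G ⧸ N) ⁻¹' {y} = (fun n => y.out * n) '' (N : Set G) := by
      ext x
      simp only [Set.mem_preimage, Set.mem_singleton_iff, Set.mem_image]
      constructor
      · intro h
        refine ⟨y.out⁻¹ * x, ?_, by group⟩
        have : QuotientGroup.mk y.out = y := QuotientGroup.out_eq' y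
        rw [← this] at h
        exact (QuotientGroup.eq (s := N)).mp h.symm
      · rintro ⟨n, hn, rfl⟩
        have : QuotientGroup.mk y.out = y := QuotientGroup.out_eq' y
        rw [← this]
        exact ((QuotientGroup.eq (s := N)).mpr (by simpa using hn)).symm
    rw [this]
    exact hN.image (continuous_mul_left _)
  exact hproper.isCompact_preimage hK

theorem stmt_13 {G : Type*} [Group G] [TopologicalSpace G] [IsTopologicalGroup G] [T2Space G]
    (N : Subgroup G) [N.Normal] (hN : IsCompact (N : Set G)) :
    CoarselyUniform (EF {K : Set G | IsCompact K}) (EF {K : Set (G ⧸ N) | IsCompact K})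
      (QuotientGroup.mk : G → G ⧸ N) ∧
    ∃ ψ : G ⧸ N → G,
      CoarselyUniform (EF {K : Set (G ⧸ N) | IsCompact K}) (EF {K : Set G | IsCompact K}) ψ ∧
      Close (EF {K : Set G | IsCompact K}) (ψ ∘ (QuotientGroup.mk : G → G ⧸ N)) id ∧
      Close (EF {K : Set (G ⧸ N) | IsCompact K}) ((QuotientGroup.mk : G → G ⧸ N) ∘ ψ) id := by
  constructor
  · -- forward map coarsely uniform
    rintro E ⟨K, hK, hE⟩
    refine ⟨(QuotientGroup.mk : G → G ⧸ N) '' K, hK.image continuous_quotient_mk', ?_⟩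
    rintro ⟨u, v⟩ ⟨⟨x, y⟩, hxy, h⟩
    obtain ⟨g, a, ha, b, hb, hab⟩ := hE hxy
    obtain ⟨rfl, rfl⟩ := Prod.mk.injEq .. ▸ hab
    simp only [Prod.map, Prod.mk.injEq] at h
    refine ⟨QuotientGroup.mk g, QuotientGroup.mk a, ⟨a, ha, rfl⟩,
      QuotientGroup.mk b, ⟨b, hb, rfl⟩, ?_⟩
    rw [← h.1, ← h.2]
    simp [QuotientGroup.mk_mul]
  · refine ⟨fun x => x.out, ?_, ?_, ?_⟩
    · -- ψ coarsely uniform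
      rintro E ⟨K, hK, hE⟩
      refine ⟨(QuotientGroup.mk : G → G ⧸ N) ⁻¹' (K⁻¹ * K) ∪ {1},
        (compact_preimage_mk N hN (hK.inv.mul hK)).union isCompact_singleton, ?_⟩
      rintro ⟨u, v⟩ ⟨⟨x, y⟩, hxy, h⟩
      obtain ⟨g, a, ha, b, hb, hab⟩ := hE hxy
      obtain ⟨rfl, rfl⟩ := Prod.mk.injEq .. ▸ hab
      simp only [Prod.map, Prod.mk.injEq] at h
      refine ⟨u, 1, Or.inr rfl, u⁻¹ * v, Or.inl ?_, by rw [← h.1, ← h.2]; simp⟩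
      rw [← h.1, ← h.2]
      have h1 : QuotientGroup.mk ((g * a).out : G) = g * a := QuotientGroup.out_eq' _
      have h2 : QuotientGroup.mk ((g * b).out : G) = g * b := QuotientGroup.out_eq' _
      show QuotientGroup.mk (((g * a).out)⁻¹ * (g * b).out) ∈ K⁻¹ * K
      rw [QuotientGroup.mk_mul, QuotientGroup.mk_inv, h1, h2]
      have : (g * a)⁻¹ * (g * b) = a⁻¹ * b := by group
      rw [mul_inv_rev, mul_assoc, ← mul_assoc g⁻¹, inv_mul_cancel, one_mul]
      exact Set.mul_mem_mul (Set.inv_mem_inv.mpr ha) hb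
    · -- ψ ∘ mk close to id
      refine ⟨(N : Set G), hN, ?_⟩
      rintro ⟨u, v⟩ ⟨s, hs⟩
      obtain ⟨rfl, rfl⟩ := Prod.mk.injEq .. ▸ hs
      refine ⟨v, v⁻¹ * ((QuotientGroup.mk v : G ⧸ N).out), ?_, 1, N.one_mem, by simp⟩
      rw [SetLike.mem_coe, ← QuotientGroup.eq]
      exact (QuotientGroup.out_eq' _).symm
    · -- mk ∘ ψ close to id
      refine ⟨{1}, isCompact_singleton, ?_⟩
      rintro ⟨u, v⟩ ⟨s, hs⟩
      obtain ⟨rfl, rfl⟩ := Prod.mk.injEq .. ▸ hs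
      exact ⟨v, 1, rfl, 1, rfl, by simp [QuotientGroup.out_eq']⟩
end

section
/- Let G be a group with generating family F such that (G, E_F) is connected, and suppose G is generated as an abstract group by a set S ∈ F̂. Then asdim(G, E_F) = 0 if and only if G ∈ F. -/
open Set Pointwise

theorem stmt_14 {G : Type*} [Group G] (F : Set (Set G)) (hF : IsGenFamily F)
    (hconn : ConnectedCoarse (EF F)) (S : Set G) (hS : S ∈ hatF F)
    (hgen : Subgroup.closure S = ⊤) :
    asdimLE (EF F) 0 ↔ (Set.univ : Set G) ∈ F := by
  constructor
  · intro h
    obtain ⟨B, hB, hSB⟩ := hS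
    obtain ⟨A, hA, a, ha⟩ := hF.exists_nonempty
    set C : Set G := (A⁻¹ * A) ∪ (B ∪ B⁻¹) with hCdef
    have hCF : C ∈ F :=
      hF.union_mem _ (hF.mul_mem _ (hF.inv_mem _ hA) _ hA) _
        (hF.union_mem _ hB _ (hF.inv_mem _ hB))
    have h1C : (1 : G) ∈ C := by
      have : a⁻¹ * a ∈ A⁻¹ * A := Set.mul_mem_mul (Set.inv_mem_inv.mpr ha) ha
      rw [inv_mul_cancel] at this
      exact Or.inl this
    have hL : GProd C C ∈ EF F := ⟨C, hCF, subset_rfl⟩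
    obtain ⟨U, hcover, hdisj, hbd⟩ := h _ hL
    have mem_cover : ∀ y : G, ∃ i, ∃ A' ∈ U i, y ∈ A' := by
      intro y
      have : y ∈ ⋃ i, ⋃₀ U i := hcover ▸ Set.mem_univ y
      obtain ⟨_, ⟨i, rfl⟩, A', hA', hy⟩ := this
      exact ⟨i, A', hA', hy⟩
    obtain ⟨i, A₀, hA₀, h1A₀⟩ := mem_cover 1
    have step : ∀ x ∈ A₀, ∀ y : G, (y, x) ∈ GProd C C → y ∈ A₀ := by
      intro x hx y hyx
      obtain ⟨j, A', hA', hyA'⟩ := mem_cover y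
      have hji : j = i := Fin.ext (by omega)
      subst hji
      by_cases hAe : A' = A₀
      · exact hAe ▸ hyA'
      · exact absurd hyx (hdisj j A' hA' A₀ hA₀ hAe y hyA' x hx)
    have stepC : ∀ x ∈ A₀, ∀ c ∈ C, x * c ∈ A₀ := by
      intro x hx c hc
      refine step x hx (x * c) ⟨x, c, hc, 1, h1C, ?_⟩
      simp
    let P : Subgroup G :=
      { carrier := {g | (∀ x ∈ A₀, x * g ∈ A₀) ∧ (∀ x ∈ A₀, x * g⁻¹ ∈ A₀)}
        one_mem' := by simp
        mul_mem' := by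
          rintro g h' ⟨hg1, hg2⟩ ⟨hh1, hh2⟩
          refine ⟨fun x hx => ?_, fun x hx => ?_⟩
          · rw [← mul_assoc]; exact hh1 _ (hg1 x hx)
          · rw [mul_inv_rev, ← mul_assoc]; exact hg2 _ (hh2 x hx)
        inv_mem' := by
          rintro g ⟨hg1, hg2⟩
          exact ⟨hg2, by simpa using hg1⟩ }
    have hSP : S ⊆ P := by
      intro s hs
      refine ⟨fun x hx => stepC x hx s (Or.inr (Or.inl (hSB hs))),
        fun x hx => stepC x hx s⁻¹ (Or.inr (Or.inr (Set.inv_mem_inv.mpr (hSB hs))))⟩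
    have hPtop : (⊤ : Subgroup G) ≤ P := hgen ▸ (Subgroup.closure_le P).mpr hSP
    have hA₀univ : A₀ = Set.univ := by
      apply Set.eq_univ_of_forall
      intro g
      have hg : g ∈ P := hPtop (Subgroup.mem_top g)
      simpa using hg.1 1 h1A₀
    obtain ⟨M, ⟨D, hD, hMD⟩, hbdd⟩ := hbd
    have hsub : (Set.univ : Set G) ×ˢ (Set.univ : Set G) ⊆ GProd D D := by
      rw [← hA₀univ]
      exact (hbdd A₀ (Set.mem_iUnion.mpr ⟨i, hA₀⟩)).trans hMD
    have huniv : D⁻¹ * D = Set.univ := by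
      apply Set.eq_univ_of_forall
      intro x
      obtain ⟨g, d₁, hd₁, d₂, hd₂, hp⟩ := hsub (Set.mk_mem_prod (Set.mem_univ x) (Set.mem_univ 1))
      have h1 : x = g * d₁ := congrArg Prod.fst hp
      have h2 : (1 : G) = g * d₂ := congrArg Prod.snd hp
      have hg : g = d₂⁻¹ := eq_inv_of_mul_eq_one_left h2.symm
      have : x = d₂⁻¹ * d₁ := by rw [h1, hg]
      rw [this]
      exact Set.mul_mem_mul (Set.inv_mem_inv.mpr hd₂) hd₁
    rw [← huniv]
    exact hF.mul_mem _ (hF.inv_mem _ hD) _ hD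
  · intro huniv L hL
    refine ⟨fun _ => {Set.univ}, ?_, ?_, ?_⟩
    · simp [Set.sUnion_singleton, Set.iUnion_const]
    · intro i A hAmem B hBmem hne
      simp only [Set.mem_singleton_iff] at hAmem hBmem
      exact absurd (hAmem.trans hBmem.symm) hne
    · refine ⟨GProd Set.univ Set.univ, ⟨Set.univ, huniv, subset_rfl⟩, ?_⟩
      intro A hAmem p hp
      exact ⟨1, p.1, Set.mem_univ _, p.2, Set.mem_univ _, by simp⟩
end

section
/- Let G be a Hausdorff topological group with a compact set of generators. Then the asymptotic dimension of G with respect to the group-compact coarse structure is 0 if and only if G is compact. -/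
open Set Pointwise

theorem stmt_15 {G : Type*} [Group G] [TopologicalSpace G] [IsTopologicalGroup G] [T2Space G]
    (K : Set G) (hK : IsCompact K) (hgen : Subgroup.closure K = ⊤) :
    asdimLE (EF {C : Set G | IsCompact C}) 0 ↔ IsCompact (Set.univ : Set G) := by
  constructor
  · intro h
    set K' : Set G := insert 1 (K ∪ K⁻¹) with hK'def
    have hK'cpt : IsCompact K' := (hK.union hK.inv).insert 1
    have h1K' : (1 : G) ∈ K' := Set.mem_insert _ _
    obtain ⟨U, hcover, hdisj, M, ⟨C, hC, hMC⟩, hbd⟩ :=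
      h (GProd K' K') ⟨K', hK'cpt, subset_rfl⟩
    -- find the set A of the cover containing 1
    have h1 : (1 : G) ∈ ⋃ i, ⋃₀ U i := hcover ▸ Set.mem_univ 1
    obtain ⟨_, ⟨i0, rfl⟩, A, hAU, h1A⟩ := h1
    have hi0 : ∀ i : Fin 1, i = i0 := fun i => Subsingleton.elim i i0
    -- step lemma: if x ∈ A and (x, y) ∈ L then y ∈ A
    have step : ∀ x ∈ A, ∀ y : G, (x, y) ∈ GProd K' K' → y ∈ A := by
      intro x hx y hxy
      have hy : y ∈ ⋃ i, ⋃₀ U i := hcover ▸ Set.mem_univ y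
      obtain ⟨_, ⟨i, rfl⟩, B, hBU, hyB⟩ := hy
      rw [hi0 i] at hBU
      by_cases hAB : A = B
      · exact hAB ▸ hyB
      · exact absurd hxy (hdisj i0 A hAU B hBU hAB x hx y hyB)
    -- A is all of G
    have hA : A = Set.univ := by
      apply Set.eq_univ_of_forall
      intro g
      have hg : g ∈ Subgroup.closure K := hgen ▸ Subgroup.mem_top g
      have key : (∀ a ∈ A, a * g ∈ A) ∧ (∀ a ∈ A, a * g⁻¹ ∈ A) := by
        refine Subgroup.closure_induction ?_ ?_ ?_ ?_ hg
        · intro k hk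
          constructor
          · intro a ha
            exact step a ha (a * k) ⟨a, 1, h1K', k, Set.mem_insert_iff.2
              (Or.inr (Or.inl hk)), by simp⟩
          · intro a ha
            exact step a ha (a * k⁻¹) ⟨a * k⁻¹, k, Set.mem_insert_iff.2
              (Or.inr (Or.inl hk)), 1, h1K', by simp [mul_assoc]⟩
        · exact ⟨fun a ha => by simpa using ha, fun a ha => by simpa using ha⟩
        · intro x y _ _ hx hy
          constructor
          · intro a ha; rw [← mul_assoc]; exact hy.1 _ (hx.1 a ha)
          · intro a ha; rw [mul_inv_rev, ← mul_assoc]; exact hx.2 _ (hy.2 a ha)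
        · intro k _ hk
          exact ⟨hk.2, by simpa using hk.1⟩
      simpa using key.1 1 h1A
    -- conclude compactness
    have hsub : (Set.univ : Set G) ⊆ C⁻¹ * C := by
      intro y _
      have : (y, 1) ∈ M := hbd A ⟨_, ⟨i0, rfl⟩, hAU⟩ (by rw [hA]; exact ⟨trivial, trivial⟩)
      obtain ⟨g, c, hc, d, hd, heq⟩ := hMC this
      obtain ⟨h1, h2⟩ := Prod.mk.injEq .. ▸ heq
      have : g = d⁻¹ := eq_inv_of_mul_eq_one_left h2.symm
      exact ⟨d⁻¹, Set.inv_mem_inv.2 hd, c, hc, by rw [h1, this]⟩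
    exact (hC.inv.mul hC).of_isClosed_subset isClosed_univ hsub
  · intro hcpt L hL
    refine ⟨fun _ => {Set.univ}, ?_, ?_, ?_⟩
    · simp [Set.iUnion_const]
    · intro i A hA B hB hAB
      simp only [Set.mem_singleton_iff] at hA hB
      exact absurd (hA.trans hB.symm) hAB
    · refine ⟨Set.univ ×ˢ Set.univ, ⟨Set.univ, hcpt, ?_⟩, ?_⟩
      · rintro ⟨x, y⟩ _
        exact ⟨x, 1, trivial, x⁻¹ * y, trivial, by simp⟩
      · intro A hA
        simp
end

section
/- Let G be a group with generating family F such that (G, E_F) is connected, and let H ⊆ G be a subgroup (with F|_H nonempty). Then asdim(H, E_{F|_H}) ≤ asdim(G, E_F). -/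
open Set Pointwise

theorem stmt_16 {G : Type*} [Group G] (F : Set (Set G)) (hF : IsGenFamily F)
    (hconn : ConnectedCoarse (EF F)) (H : Subgroup G)
    (hne : ∃ A ∈ F, (A ∩ (H : Set G)).Nonempty) (n : ℕ)
    (hG : asdimLE (EF F) n) :
    asdimLE (EF (restrictFamily F H)) n := by
  intro L hL
  obtain ⟨C, ⟨A, hA, rfl⟩, hLC⟩ := hL
  -- push L to G
  set LG : Set (G × G) := Prod.map (Subtype.val) (Subtype.val) '' L with hLGdef
  have hLGmem : LG ∈ EF F := by
    refine ⟨A, hA, ?_⟩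
    rintro p ⟨⟨x, y⟩, hxy, rfl⟩
    obtain ⟨g, a, ha, b, hb, heq⟩ := hLC hxy
    refine ⟨(g : G), (a : G), ha, (b : G), hb, ?_⟩
    rw [Prod.mk.injEq] at heq
    simp [Prod.map, heq.1, heq.2]
  obtain ⟨U, hcov, hdisj, M, hM, hMB⟩ := hG LG hLGmem
  obtain ⟨A₂, hA₂, hMA₂⟩ := hM
  -- A₂ is nonempty
  have h1cov : ((1 : G) : G) ∈ ⋃ i, ⋃₀ U i := by rw [hcov]; trivial
  obtain ⟨_, ⟨i, rfl⟩, B₀, hB₀, h1B₀⟩ := h1cov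
  have hMne : ((1 : G), (1 : G)) ∈ M :=
    hMB B₀ (Set.mem_iUnion.2 ⟨i, hB₀⟩) ⟨h1B₀, h1B₀⟩
  obtain ⟨g₀, a₀, ha₀, b₀, hb₀, -⟩ := hMA₂ hMne
  have hD : A₂⁻¹ * A₂ ∈ F := hF.mul_mem _ (hF.inv_mem _ hA₂) _ hA₂
  have h1D : (1 : G) ∈ A₂⁻¹ * A₂ := by
    refine ⟨a₀⁻¹, Set.inv_mem_inv.2 ha₀, a₀, ha₀, inv_mul_cancel a₀⟩
  refine ⟨fun i => (fun B => (Subtype.val ⁻¹' B : Set H)) '' (U i), ?_, ?_, ?_⟩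
  · ext h
    simp only [Set.mem_univ, iff_true]
    have : (h : G) ∈ ⋃ i, ⋃₀ U i := by rw [hcov]; trivial
    obtain ⟨_, ⟨i, rfl⟩, B, hB, hhB⟩ := this
    exact Set.mem_iUnion.2 ⟨i, Set.mem_sUnion.2 ⟨_, ⟨B, hB, rfl⟩, hhB⟩⟩
  · rintro i _ ⟨B₁, hB₁, rfl⟩ _ ⟨B₂, hB₂, rfl⟩ hne12 a ha b hb hab
    have hB12 : B₁ ≠ B₂ := by rintro rfl; exact hne12 rfl
    exact hdisj i B₁ hB₁ B₂ hB₂ hB12 (a : G) ha (b : G) hb ⟨(a, b), hab, rfl⟩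
  · refine ⟨{p : H × H | ((p.2 : G))⁻¹ * (p.1 : G) ∈ A₂⁻¹ * A₂}, ?_, ?_⟩
    · refine ⟨Subtype.val ⁻¹' (A₂⁻¹ * A₂), ⟨_, hD, rfl⟩, ?_⟩
      rintro ⟨x, y⟩ hxy
      refine ⟨y, y⁻¹ * x, hxy, 1, h1D, ?_⟩
      simp
    · rintro _ ⟨_, ⟨i, rfl⟩, B, hB, rfl⟩ ⟨x, y⟩ ⟨hx, hy⟩
      have hxyM : ((x : G), (y : G)) ∈ M :=
        hMB B (Set.mem_iUnion.2 ⟨i, hB⟩) ⟨hx, hy⟩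
      obtain ⟨g, a, haA, b, hbA, heq⟩ := hMA₂ hxyM
      have hx' : (x : G) = g * a := congrArg Prod.fst heq
      have hy' : (y : G) = g * b := congrArg Prod.snd heq
      show ((y : G))⁻¹ * (x : G) ∈ A₂⁻¹ * A₂
      rw [hx', hy']
      refine ⟨b⁻¹, Set.inv_mem_inv.2 hbA, a, haA, by group⟩
end

section
/- Let G be a group with generating family F such that (G, E_F) is connected, and let H be a collection of subgroups of G with the property that every K ∈ F is contained in some H ∈ H. Then asdim(G, E_F) = sup{ asdim(H, E_{F|_H}) : H ∈ H }. -/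
open Set Pointwise

theorem stmt_17 {G : Type*} [Group G] (F : Set (Set G)) (hF : IsGenFamily F)
    (hconn : ConnectedCoarse (EF F)) (𝓗 : Set (Subgroup G))
    (h𝓗 : ∀ K ∈ F, ∃ H ∈ 𝓗, K ⊆ (H : Set G)) (n : ℕ) :
    asdimLE (EF F) n ↔ ∀ H ∈ 𝓗, asdimLE (EF (restrictFamily F H)) n := by

  constructor
  · -- Forward: restrict to each subgroup
    intro hG H _hH L hL
    obtain ⟨A', hA'mem, hLsub⟩ := hL
    obtain ⟨A, hA, rfl⟩ := hA'mem
    -- push L forward to G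
    have hL'mem : (Prod.map (Subtype.val : H → G) Subtype.val '' L) ∈ EF F := by
      refine ⟨A, hA, ?_⟩
      rintro p ⟨⟨x, y⟩, hxy, rfl⟩
      obtain ⟨g, a, ha, b, hb, hp⟩ := hLsub hxy
      refine ⟨(g : G), (a : G), ha, (b : G), hb, ?_⟩
      have hx : x = g * a := congrArg Prod.fst hp
      have hy : y = g * b := congrArg Prod.snd hp
      simp [hx, hy, Prod.map]
    obtain ⟨U, hcov, hdisj, M, hM, hbnd⟩ := hG _ hL'mem
    obtain ⟨B, hB, hMsub⟩ := hM
    refine ⟨fun i => (fun S => (Subtype.val ⁻¹' S : Set H)) '' U i, ?_, ?_, ?_⟩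
    · ext h
      simp only [Set.mem_iUnion, Set.mem_sUnion, Set.mem_univ, iff_true]
      have : (h : G) ∈ ⋃ i, ⋃₀ U i := by rw [hcov]; trivial
      simp only [Set.mem_iUnion, Set.mem_sUnion] at this
      obtain ⟨i, S, hS, hhS⟩ := this
      exact ⟨i, _, ⟨S, hS, rfl⟩, hhS⟩
    · intro i S hS T hT hne s hs t ht hst
      obtain ⟨S₀, hS₀, rfl⟩ := hS
      obtain ⟨T₀, hT₀, rfl⟩ := hT
      have hne0 : S₀ ≠ T₀ := fun h => hne (by rw [h])
      exact hdisj i S₀ hS₀ T₀ hT₀ hne0 (s : G) hs (t : G) ht ⟨(s, t), hst, rfl⟩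
    · refine ⟨Prod.map Subtype.val Subtype.val ⁻¹' M, ?_, ?_⟩
      · have hB' : B⁻¹ * B ∈ F := hF.mul_mem _ (hF.inv_mem B hB) _ hB
        refine ⟨(Subtype.val ⁻¹' (B⁻¹ * B) : Set H), ⟨B⁻¹ * B, hB', rfl⟩, ?_⟩
        rintro ⟨x, y⟩ hxy
        obtain ⟨g, b₁, hb₁, b₂, hb₂, hp⟩ := hMsub hxy
        have hx : (x : G) = g * b₁ := congrArg Prod.fst hp
        have hy : (y : G) = g * b₂ := congrArg Prod.snd hp
        refine ⟨y, y⁻¹ * x, ?_, 1, ?_, ?_⟩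
        · show ((y⁻¹ * x : H) : G) ∈ B⁻¹ * B
          have : ((y⁻¹ * x : H) : G) = b₂⁻¹ * b₁ := by
            push_cast [hx, hy]; group
          rw [this]
          exact Set.mul_mem_mul (Set.inv_mem_inv.mpr hb₂) hb₁
        · show ((1 : H) : G) ∈ B⁻¹ * B
          have : ((1 : H) : G) = b₂⁻¹ * b₂ := by simp
          rw [this]
          exact Set.mul_mem_mul (Set.inv_mem_inv.mpr hb₂) hb₂
        · simp
      · rintro S hS
        simp only [Set.mem_iUnion] at hS
        obtain ⟨i, S₀, hS₀, rfl⟩ := hS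
        rintro ⟨x, y⟩ ⟨hx, hy⟩
        exact hbnd S₀ (Set.mem_iUnion.mpr ⟨i, hS₀⟩) ⟨hx, hy⟩
  · -- Backward: assemble covers along cosets
    intro hH L hL
    obtain ⟨A, hA, hLsub⟩ := hL
    obtain ⟨H, hHmem, hAH⟩ := h𝓗 A hA
    have hLH : GProd (Subtype.val ⁻¹' A : Set H) (Subtype.val ⁻¹' A) ∈
        EF (restrictFamily F H) := ⟨_, ⟨A, hA, rfl⟩, le_refl _⟩
    obtain ⟨U, hcov, hdisj, MH, hMH, hbnd⟩ := hH H hHmem _ hLH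
    obtain ⟨B', ⟨B, hB, rfl⟩, hMsub⟩ := hMH
    -- the translated cover
    refine ⟨fun i => {S | ∃ q : G ⧸ H, ∃ T ∈ U i,
        S = (fun h : H => Quotient.out q * (h : G)) '' T}, ?_, ?_, ?_⟩
    · ext g
      simp only [Set.mem_iUnion, Set.mem_sUnion, Set.mem_univ, iff_true]
      set q : G ⧸ H := QuotientGroup.mk g with hq
      have hqout : (QuotientGroup.mk (Quotient.out q) : G ⧸ H) = QuotientGroup.mk g :=
        QuotientGroup.out_eq' q
      have hmem : (Quotient.out q)⁻¹ * g ∈ H := (QuotientGroup.eq).mp hqout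
      set h₀ : H := ⟨(Quotient.out q)⁻¹ * g, hmem⟩ with hh₀
      have : h₀ ∈ ⋃ i, ⋃₀ U i := by rw [hcov]; trivial
      simp only [Set.mem_iUnion, Set.mem_sUnion] at this
      obtain ⟨i, T, hT, hh⟩ := this
      refine ⟨i, _, ⟨q, T, hT, rfl⟩, ⟨h₀, hh, ?_⟩⟩
      show Quotient.out q * ((Quotient.out q)⁻¹ * g) = g
      group
    · intro i S hS T hT hne s hs t ht hst
      obtain ⟨q, S₀, hS₀, rfl⟩ := hS
      obtain ⟨q', T₀, hT₀, rfl⟩ := hT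
      obtain ⟨h₁, hh₁, hs'⟩ := hs
      obtain ⟨h₂, hh₂, ht'⟩ := ht
      obtain ⟨g, a, haA, b, hbA, hp⟩ := hLsub hst
      have hsg : s = g * a := congrArg Prod.fst hp
      have htg : t = g * b := congrArg Prod.snd hp
      have hqs : q = QuotientGroup.mk g := by
        have hs'' : Quotient.out q * (h₁ : G) = s := hs'
        have h1 : (QuotientGroup.mk s : G ⧸ H) = q := by
          rw [← hs'', QuotientGroup.mk_mul_of_mem _ h₁.2]
          exact QuotientGroup.out_eq' q
        have h2 : (QuotientGroup.mk s : G ⧸ H) = QuotientGroup.mk g := by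
          rw [hsg]; exact QuotientGroup.mk_mul_of_mem g (hAH haA)
        rw [← h1, h2]
      have hqt : q' = QuotientGroup.mk g := by
        have ht'' : Quotient.out q' * (h₂ : G) = t := ht'
        have h1 : (QuotientGroup.mk t : G ⧸ H) = q' := by
          rw [← ht'', QuotientGroup.mk_mul_of_mem _ h₂.2]
          exact QuotientGroup.out_eq' q'
        have h2 : (QuotientGroup.mk t : G ⧸ H) = QuotientGroup.mk g := by
          rw [htg]; exact QuotientGroup.mk_mul_of_mem g (hAH hbA)
        rw [← h1, h2]
      have hqq : q = q' := by rw [hqs, hqt]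
      have hne0 : S₀ ≠ T₀ := by
        intro h; apply hne; rw [h, hqq]
      have hkmem : (Quotient.out q)⁻¹ * g ∈ H := by
        have : (Quotient.out q)⁻¹ * g = (h₁ : G) * a⁻¹ := by
          have : (h₁ : G) = (Quotient.out q)⁻¹ * s := by rw [← hs']; group
          rw [this, hsg]; group
        rw [this]
        exact H.mul_mem h₁.2 (H.inv_mem (hAH haA))
      refine hdisj i S₀ hS₀ T₀ hT₀ hne0 h₁ hh₁ h₂ hh₂
        ⟨⟨(Quotient.out q)⁻¹ * g, hkmem⟩, ⟨a, hAH haA⟩, haA, ⟨b, hAH hbA⟩, hbA, ?_⟩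
      have e1 : (h₁ : G) = (Quotient.out q)⁻¹ * g * a := by
        have : (h₁ : G) = (Quotient.out q)⁻¹ * s := by rw [← hs']; group
        rw [this, hsg]; group
      have e2 : (h₂ : G) = (Quotient.out q)⁻¹ * g * b := by
        have : (h₂ : G) = (Quotient.out q')⁻¹ * t := by rw [← ht']; group
        rw [this, htg, ← hqq]; group
      refine Prod.ext (Subtype.ext ?_) (Subtype.ext ?_) <;> simpa using ‹_›
    · refine ⟨GProd B B, ⟨B, hB, le_refl _⟩, ?_⟩
      rintro S hS
      simp only [Set.mem_iUnion] at hS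
      obtain ⟨i, q, S₀, hS₀, rfl⟩ := hS
      rintro ⟨s, t⟩ ⟨hs, ht⟩
      obtain ⟨h₁, hh₁, hs'⟩ := hs
      obtain ⟨h₂, hh₂, ht'⟩ := ht
      have : (h₁, h₂) ∈ MH := hbnd S₀ (Set.mem_iUnion.mpr ⟨i, hS₀⟩) ⟨hh₁, hh₂⟩
      obtain ⟨k, b₁, hb₁, b₂, hb₂, hp⟩ := hMsub this
      have e1 : h₁ = k * b₁ := congrArg Prod.fst hp
      have e2 : h₂ = k * b₂ := congrArg Prod.snd hp
      have hs'' : Quotient.out q * (h₁ : G) = s := hs'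
      have ht'' : Quotient.out q * (h₂ : G) = t := ht'
      refine ⟨Quotient.out q * (k : G), (b₁ : G), hb₁, (b₂ : G), hb₂, Prod.ext ?_ ?_⟩
      · show s = Quotient.out q * (k : G) * (b₁ : G)
        rw [← hs'', e1]; push_cast; group
      · show t = Quotient.out q * (k : G) * (b₂ : G)
        rw [← ht'', e2]; push_cast; group
end

section
/- Let 1 → N → G → Q → 1 be an extension of groups with i : N → G the inclusion and π : G → Q the quotient map, and let F be a generating family on G with (G, E_F) connected. If asdim(N, E_{F|_N}) ≤ n and asdim(Q, E_{π(F)}) ≤ k, then asdim(G, E_F) ≤ (n+1)(k+1) − 1. -/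
open Set Pointwise

section Helpers

variable {G : Type*} [Group G]

lemma mem_GProd_iff {A : Set G} {p : G × G} :
    p ∈ GProd A A ↔ p.2⁻¹ * p.1 ∈ A⁻¹ * A := by
  constructor
  · rintro ⟨g, a, ha, b, hb, rfl⟩
    have : (g * b)⁻¹ * (g * a) = b⁻¹ * a := by group
    rw [this]
    exact Set.mul_mem_mul (Set.inv_mem_inv.mpr hb) ha
  · rintro ⟨c, hc, a, ha, hca⟩
    have hca' : c * a = p.2⁻¹ * p.1 := hca
    refine ⟨p.2 * c, a, ha, c⁻¹, Set.mem_inv.mp hc, ?_⟩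
    have h1 : p.2 * c * a = p.1 := by
      rw [mul_assoc, hca']; group
    have h2 : p.2 * c * c⁻¹ = p.2 := by group
    rw [h1, h2]

lemma mem_invmul_of_mem {A : Set G} {x : G} (h1 : (1 : G) ∈ A) (hx : x ∈ A) :
    x ∈ A⁻¹ * A := by
  have : (1 : G) ∈ A⁻¹ := Set.mem_inv.mpr (by simpa using h1)
  simpa using Set.mul_mem_mul this hx

lemma GProd_mono {A B : Set G} (h : A ⊆ B) : GProd A A ⊆ GProd B B := by
  rintro p ⟨g, a, ha, b, hb, rfl⟩
  exact ⟨g, a, h ha, b, h hb, rfl⟩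

end Helpers

theorem stmt_18 {G : Type*} [Group G] (N : Subgroup G) [N.Normal]
    (F : Set (Set G)) (hF : IsGenFamily F) (hconn : ConnectedCoarse (EF F)) (n k : ℕ)
    (hN : asdimLE (EF (restrictFamily F N)) n)
    (hQ : asdimLE (EF ((fun A => (QuotientGroup.mk : G → G ⧸ N) '' A) '' F)) k) :
    asdimLE (EF F) ((n + 1) * (k + 1) - 1) := by
  classical
  intro L hL
  set π : G → G ⧸ N := QuotientGroup.mk with hπ
  -- Step 0: a symmetric set A ∈ F containing 1 with L ⊆ GProd A A
  obtain ⟨A₁, hA₁F, hA₁ne⟩ := hF.exists_nonempty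
  obtain ⟨A₂, hA₂F, hLsub⟩ := hL
  set A₀ : Set G := A₂ ∪ A₁ with hA₀
  have hA₀F : A₀ ∈ F := hF.union_mem _ hA₂F _ hA₁F
  set A : Set G := A₀⁻¹ * A₀ with hA
  have hAF : A ∈ F := hF.mul_mem _ (hF.inv_mem _ hA₀F) _ hA₀F
  have hAsymm : A⁻¹ = A := by rw [hA, mul_inv_rev, inv_inv]
  have h1A : (1 : G) ∈ A := by
    obtain ⟨a, ha⟩ := hA₁ne
    have ha' : a ∈ A₀ := Or.inr ha
    have := Set.mul_mem_mul (Set.inv_mem_inv.mpr ha') ha'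
    rwa [inv_mul_cancel] at this
  have hLA : ∀ p ∈ L, p.2⁻¹ * p.1 ∈ A := by
    intro p hp
    have := hLsub hp
    obtain ⟨g, a, ha, b, hb, rfl⟩ := this
    have : (g * b)⁻¹ * (g * a) = b⁻¹ * a := by group
    rw [this]
    exact Set.mul_mem_mul (Set.inv_mem_inv.mpr (Or.inl hb)) (Or.inl ha)
  -- Step 1: apply hQ at scale π '' A
  have hπAmem : (π '' A) ∈ ((fun A => (QuotientGroup.mk : G → G ⧸ N) '' A) '' F) :=
    ⟨A, hAF, rfl⟩
  obtain ⟨V, hVcov, hVdisj, MQ, hMQmem, hVbdd⟩ :=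
    hQ (GProd (π '' A) (π '' A)) ⟨π '' A, hπAmem, subset_rfl⟩
  obtain ⟨PD₀, ⟨D₀, hD₀F, rfl⟩, hMQsub⟩ := hMQmem
  -- the set D
  set D : Set G := D₀⁻¹ * D₀ ∪ A with hD
  have hDF : D ∈ F := hF.union_mem _ (hF.mul_mem _ (hF.inv_mem _ hD₀F) _ hD₀F) _ hAF
  have h1D : (1 : G) ∈ D := Or.inr h1A
  have hDsymm : D⁻¹ = D := by
    rw [hD]
    rw [show (D₀⁻¹ * D₀ ∪ A)⁻¹ = (D₀⁻¹ * D₀)⁻¹ ∪ A⁻¹ from rfl, mul_inv_rev, inv_inv, hAsymm]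
  -- key quotient bound fact
  have hkey : ∀ j, ∀ Vs ∈ V j, ∀ x y : G, π x ∈ Vs → π y ∈ Vs →
      ∃ ν ∈ (N : Set G), ∃ d ∈ D, y⁻¹ * x = ν * d := by
    intro j Vs hVs x y hx hy
    have hmem : (π x, π y) ∈ MQ := hVbdd Vs (Set.mem_iUnion.mpr ⟨j, hVs⟩) ⟨hx, hy⟩
    have := mem_GProd_iff.mp (hMQsub hmem)
    obtain ⟨c, hc, a, ⟨a₀, ha₀, rfl⟩, hca⟩ := this
    have hca' : c * π a₀ = (π y)⁻¹ * (π x) := hca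
    have hc' : c⁻¹ ∈ π '' D₀ := Set.mem_inv.mp hc
    obtain ⟨b₀, hb₀, hb₀eq⟩ := hc'
    -- (π y)⁻¹ * (π x) = c * π a₀ = (π b₀)⁻¹ * π a₀ = π (b₀⁻¹ * a₀)
    have heq : π (y⁻¹ * x) = π (b₀⁻¹ * a₀) := by
      have h1 : π (y⁻¹ * x) = (π y)⁻¹ * π x := by
        simp [hπ, QuotientGroup.mk_mul, QuotientGroup.mk_inv]
      have h2 : π (b₀⁻¹ * a₀) = (π b₀)⁻¹ * π a₀ := by
        simp [hπ, QuotientGroup.mk_mul, QuotientGroup.mk_inv]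
      rw [h1, h2, hb₀eq, ← hca']
      simp [inv_inv]
    have hmemN : (y⁻¹ * x)⁻¹ * (b₀⁻¹ * a₀) ∈ N := QuotientGroup.eq.mp heq
    set w : G := (y⁻¹ * x)⁻¹ * (b₀⁻¹ * a₀) with hw
    have hd : b₀⁻¹ * a₀ ∈ D := Or.inl (Set.mul_mem_mul (Set.inv_mem_inv.mpr hb₀) ha₀)
    refine ⟨(b₀⁻¹ * a₀) * w⁻¹ * (b₀⁻¹ * a₀)⁻¹, ?_, b₀⁻¹ * a₀, hd, by rw [hw]; group⟩
    exact Subgroup.Normal.conj_mem ‹N.Normal› _ (N.inv_mem hmemN) _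
  -- Step 2: apply hN at scale val⁻¹' (D * A * D)
  set Bset : Set G := D * A * D with hBset
  have hBsetF : Bset ∈ F := hF.mul_mem _ (hF.mul_mem _ hDF _ hAF) _ hDF
  set BN : Set N := (Subtype.val ⁻¹' Bset : Set N) with hBN
  have hBNmem : BN ∈ restrictFamily F N := ⟨Bset, hBsetF, rfl⟩
  have h1BN : (1 : N) ∈ BN := by
    show ((1 : N) : G) ∈ Bset
    simpa using Set.mul_mem_mul (Set.mul_mem_mul h1D h1A) h1D
  obtain ⟨U, hUcov, hUdisj, MN, hMNmem, hUbdd⟩ :=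
    hN (GProd BN BN) ⟨BN, hBNmem, subset_rfl⟩
  obtain ⟨C₀, ⟨C, hCF, rfl⟩, hMNsub⟩ := hMNmem
  -- basepoints
  have gchoice : ∀ Vs : Set (G ⧸ N), (∃ y : G, π y ∈ Vs) → G := fun Vs h => h.choose
  set gpt : Set (G ⧸ N) → G := fun Vs =>
    if h : ∃ y : G, π y ∈ Vs then h.choose else 1 with hgpt
  have hgpt_mem : ∀ (Vs : Set (G ⧸ N)) (x : G), π x ∈ Vs → π (gpt Vs) ∈ Vs := by
    intro Vs x hx
    have h : ∃ y : G, π y ∈ Vs := ⟨x, hx⟩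
    simp only [hgpt, dif_pos h]
    exact h.choose_spec
  -- the chunks
  set chunk : Set (G ⧸ N) → Set N → Set G := fun Vs S =>
    {x : G | π x ∈ Vs ∧ ∃ ν ∈ S, ∃ d ∈ D, x = gpt Vs * (ν : G) * d} with hchunk
  set W : Fin (n + 1) → Fin (k + 1) → Set (Set G) := fun i j =>
    (fun p : Set (G ⧸ N) × Set N => chunk p.1 p.2) '' ((V j) ×ˢ (U i)) with hW
  -- index equivalence
  have hidx : (n + 1) * (k + 1) - 1 + 1 = (n + 1) * (k + 1) :=
    Nat.succ_pred_eq_of_pos (Nat.mul_pos (Nat.succ_pos n) (Nat.succ_pos k))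
  set e : Fin ((n + 1) * (k + 1) - 1 + 1) ≃ Fin (n + 1) × Fin (k + 1) :=
    (finCongr hidx).trans finProdFinEquiv.symm with he
  refine ⟨fun t => W (e t).1 (e t).2, ?_, ?_, ?_⟩
  · -- covering
    apply Set.eq_univ_of_forall
    intro x
    have hx : π x ∈ ⋃ j, ⋃₀ V j := by rw [hVcov]; trivial
    obtain ⟨j, Vs, hVs, hxV⟩ := by
      simpa only [Set.mem_iUnion, Set.mem_sUnion] using hx
    have hgV : π (gpt Vs) ∈ Vs := hgpt_mem Vs x hxV
    obtain ⟨ν, hνN, d, hd, hνd⟩ := hkey j Vs hVs x (gpt Vs) hxV hgV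
    have hνU : (⟨ν, hνN⟩ : N) ∈ ⋃ i, ⋃₀ U i := by rw [hUcov]; trivial
    obtain ⟨i, S, hS, hνS⟩ := by
      simpa only [Set.mem_iUnion, Set.mem_sUnion] using hνU
    have hxchunk : x ∈ chunk Vs S := by
      refine ⟨hxV, ⟨ν, hνN⟩, hνS, d, hd, ?_⟩
      show x = gpt Vs * ν * d
      rw [mul_assoc, ← hνd]; group
    refine Set.mem_iUnion.mpr ⟨e.symm (i, j), Set.mem_sUnion.mpr ⟨chunk Vs S, ?_, hxchunk⟩⟩
    simp only [Equiv.apply_symm_apply]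
    exact ⟨(Vs, S), ⟨hVs, hS⟩, rfl⟩
  · -- disjointness
    intro t P₁ hP₁ P₂ hP₂ hne x hx y hy hxyL
    obtain ⟨⟨V₁, S₁⟩, ⟨hV₁, hS₁⟩, rfl⟩ := hP₁
    obtain ⟨⟨V₂, S₂⟩, ⟨hV₂, hS₂⟩, rfl⟩ := hP₂
    have hmemA : y⁻¹ * x ∈ A := hLA (x, y) hxyL
    obtain ⟨hxV, ν₁, hν₁, d₁, hd₁, hxeq⟩ := hx
    obtain ⟨hyV, ν₂, hν₂, d₂, hd₂, hyeq⟩ := hy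
    by_cases hVV : V₁ = V₂
    · subst hVV
      have hSS : S₁ ≠ S₂ := fun h => hne (by rw [h])
      -- N-disjointness
      have hcalc : (ν₂ : G)⁻¹ * (ν₁ : G) = d₂ * (y⁻¹ * x) * d₁⁻¹ := by
        rw [hxeq, hyeq]; group
      have hmem : (ν₂ : G)⁻¹ * (ν₁ : G) ∈ Bset := by
        rw [hcalc]
        exact Set.mul_mem_mul (Set.mul_mem_mul hd₂ hmemA)
          (by rw [← hDsymm]; exact Set.inv_mem_inv.mpr hd₁)
      have hmemBN : ν₂⁻¹ * ν₁ ∈ BN := by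
        show ((ν₂⁻¹ * ν₁ : N) : G) ∈ Bset
        simpa using hmem
      have hpair : ((ν₁ : N), (ν₂ : N)) ∈ GProd BN BN :=
        mem_GProd_iff.mpr (mem_invmul_of_mem h1BN hmemBN)
      exact hUdisj (e t).1 S₁ hS₁ S₂ hS₂ hSS ν₁ hν₁ ν₂ hν₂ hpair
    · -- distinct quotient pieces
      have := hVdisj ((e t).2) V₁ hV₁ V₂ hV₂ hVV (π x) hxV (π y) hyV
      apply this
      rw [mem_GProd_iff]
      apply mem_invmul_of_mem
      · exact ⟨1, h1A, by simp [hπ]⟩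
      · refine ⟨y⁻¹ * x, hmemA, ?_⟩
        simp [hπ, QuotientGroup.mk_mul, QuotientGroup.mk_inv]
  · -- uniform boundedness
    set Cbig : Set G := (D * (C⁻¹ * C)) * D ∪ A with hCbig
    have hCbigF : Cbig ∈ F :=
      hF.union_mem _ (hF.mul_mem _ (hF.mul_mem _ hDF _
        (hF.mul_mem _ (hF.inv_mem _ hCF) _ hCF)) _ hDF) _ hAF
    have h1Cbig : (1 : G) ∈ Cbig := Or.inr h1A
    refine ⟨GProd Cbig Cbig, ⟨Cbig, hCbigF, subset_rfl⟩, ?_⟩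
    intro P hP p hp
    obtain ⟨t, hPt⟩ := Set.mem_iUnion.mp hP
    obtain ⟨⟨V₁, S₁⟩, ⟨hV₁, hS₁⟩, rfl⟩ := hPt
    obtain ⟨hx, hp1⟩ := hp
    obtain ⟨hxV, ν₁, hν₁, d₁, hd₁, hxeq⟩ := hx
    obtain ⟨hyV, ν₂, hν₂, d₂, hd₂, hyeq⟩ := hp1
    -- (ν₁, ν₂) are C₀-close in N
    have hpairMN : ((ν₁ : N), (ν₂ : N)) ∈ MN :=
      hUbdd S₁ (Set.mem_iUnion.mpr ⟨(e t).1, hS₁⟩) ⟨hν₁, hν₂⟩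
    have hνC := mem_GProd_iff.mp (hMNsub hpairMN)
    obtain ⟨c₁, hc₁, c₂, hc₂, hcc⟩ := hνC
    have hcc' : (c₁ : N) * c₂ = ν₂⁻¹ * ν₁ := hcc
    have hvalcc : ((ν₂ : N) : G)⁻¹ * ((ν₁ : N) : G) ∈ C⁻¹ * C := by
      have h1 : ((c₁ : N) : G) ∈ C⁻¹ := by
        rw [Set.mem_inv]
        have h := Set.mem_inv.mp hc₁
        simpa using h
      have h2 : ((c₂ : N) : G) ∈ C := hc₂
      have h3 : ((ν₂ : N) : G)⁻¹ * ((ν₁ : N) : G) = ((c₁ : N) : G) * ((c₂ : N) : G) := by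
        rw [← Subgroup.coe_mul, hcc']
        push_cast
        ring_nf
      rw [h3]
      exact Set.mul_mem_mul h1 h2
    have hmemCbig : p.2⁻¹ * p.1 ∈ Cbig := by
      have heq : p.2⁻¹ * p.1 = d₂⁻¹ * (((ν₂ : N) : G)⁻¹ * ((ν₁ : N) : G)) * d₁ := by
        rw [hxeq, hyeq]; group
      rw [heq]
      exact Or.inl (Set.mul_mem_mul (Set.mul_mem_mul
        (by rw [← hDsymm]; exact Set.inv_mem_inv.mpr hd₂) hvalcc) hd₁)
    have : p ∈ GProd Cbig Cbig := mem_GProd_iff.mpr (mem_invmul_of_mem h1Cbig hmemCbig)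
    exact this
end
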